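/- With v and w as defined: for every s ∈ [a, b] the denominator satisfies v(s)^p + (1 − v(s))^p > 0 (so w is well defined on [a, b]); w(a) = a and w(b) = b; w is strictly increasing on [a, b]; and w maps [a, b] onto [a, b] (so w restricts to an increasing bijection of [a, b] onto itself). -/
import Mathlib


theorem kress_w_properties (a b : ℝ) (hab : a < b) (p : ℕ) (hp : 2 ≤ p)
    (v w : ℝ → ℝ)
    (hv : ∀ s : ℝ, v s = (1/(p : ℝ) - 1/2) * ((a + b - 2*s)/(b - a))^3
        + (1/(p : ℝ)) * ((2*s - a - b)/(b - a)) + 1/2)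
    (hw : ∀ s : ℝ, w s = (b * (v s)^p + a * (1 - v s)^p) / ((v s)^p + (1 - v s)^p)) :
    (∀ s ∈ Set.Icc a b, 0 < (v s)^p + (1 - v s)^p) ∧
    w a = a ∧ w b = b ∧
    StrictMonoOn w (Set.Icc a b) ∧
    w '' Set.Icc a b = Set.Icc a b := by
  have hba : (0:ℝ) < b - a := sub_pos.2 hab
  have hp0 : (0:ℝ) < (p:ℝ) := by
    have : 0 < p := by omega
    exact_mod_cast this
  have hp2 : (2:ℝ) ≤ (p:ℝ) := by exact_mod_cast hp
  have hpne : p ≠ 0 := by omega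
  have h1 : (1:ℝ)/(p:ℝ) ≤ 1/2 := by
    rw [div_le_div_iff₀ hp0 (by norm_num)]; linarith
  have h2 : (0:ℝ) < 1/(p:ℝ) := by positivity
  -- endpoint values of v
  have hva : v a = 0 := by
    rw [hv]; field_simp; ring
  have hvb : v b = 1 := by
    rw [hv]; field_simp; ring
  -- v is strictly increasing on ℝ
  have hvmono : StrictMono v := by
    intro x y hxy
    rw [hv x, hv y]
    set tx := (a + b - 2*x)/(b - a) with htx
    set ty := (a + b - 2*y)/(b - a) with hty
    have hty_lt : ty < tx := (div_lt_div_iff_of_pos_right hba).2 (by linarith)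
    have ex : (2*x - a - b)/(b - a) = -tx := by rw [htx]; ring
    have ey : (2*y - a - b)/(b - a) = -ty := by rw [hty]; ring
    rw [ex, ey]
    have hsum : 0 ≤ ty^2 + ty*tx + tx^2 := by
      nlinarith [sq_nonneg (ty+tx), sq_nonneg ty, sq_nonneg tx]
    have hc : (0:ℝ) ≤ 1/2 - 1/(p:ℝ) := by linarith
    nlinarith [mul_pos (sub_pos.2 hty_lt) h2,
      mul_nonneg (mul_nonneg (sub_pos.2 hty_lt).le hc) hsum]
  -- v maps [a,b] into [0,1]
  have hvmem : ∀ s ∈ Set.Icc a b, v s ∈ Set.Icc (0:ℝ) 1 := by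
    intro s hs
    constructor
    · rw [← hva]; exact hvmono.monotone hs.1
    · rw [← hvb]; exact hvmono.monotone hs.2
  -- denominator positive
  have hden : ∀ s ∈ Set.Icc a b, 0 < (v s)^p + (1 - v s)^p := by
    intro s hs
    obtain ⟨h0, h11⟩ := hvmem s hs
    rcases lt_or_eq_of_le h0 with h | h
    · have : 0 < (v s)^p := pow_pos h p
      have : 0 ≤ (1 - v s)^p := pow_nonneg (by linarith) p
      positivity
    · have : (1 - v s)^p = 1 := by rw [← h]; norm_num
      have h2' : 0 ≤ (v s)^p := pow_nonneg (by linarith) p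
      linarith
  have hwmono : StrictMonoOn w (Set.Icc a b) := by
    intro s hs t ht hst
    rw [hw s, hw t]
    set x := v s with hx
    set y := v t with hy
    obtain ⟨hx0, hx1⟩ := hvmem s hs
    obtain ⟨hy0, hy1⟩ := hvmem t ht
    have hxy : x < y := hvmono hst
    have hdx : 0 < x^p + (1-x)^p := hden s hs
    have hdy : 0 < y^p + (1-y)^p := hden t ht
    rw [div_lt_div_iff₀ hdx hdy]
    have hkey : (x*(1-y))^p < (y*(1-x))^p := by
      apply pow_lt_pow_left₀ _ (mul_nonneg hx0 (by linarith)) hpne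
      nlinarith
    rw [mul_pow, mul_pow] at hkey
    nlinarith [mul_pos hba (sub_pos.2 hkey)]
  refine ⟨hden, ?_, ?_, hwmono, ?_⟩
  · rw [hw, hva]
    simp [zero_pow hpne]
  · rw [hw, hvb]
    simp [zero_pow hpne]
  · -- image
    have hveq : v = fun s => (1/(p : ℝ) - 1/2) * ((a + b - 2*s)/(b - a))^3
        + (1/(p : ℝ)) * ((2*s - a - b)/(b - a)) + 1/2 := funext hv
    have hvc : Continuous v := by
      rw [hveq]
      fun_prop
    have hwc : ContinuousOn w (Set.Icc a b) := by
      have hweq : w = fun s => (b * (v s)^p + a * (1 - v s)^p) / ((v s)^p + (1 - v s)^p) :=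
        funext hw
      rw [hweq]
      apply ContinuousOn.div
      · fun_prop
      · fun_prop
      · intro s hs
        exact (hden s hs).ne'
    have hwa : w a = a := by rw [hw, hva]; simp [zero_pow hpne]
    have hwb : w b = b := by rw [hw, hvb]; simp [zero_pow hpne]
    apply Set.Subset.antisymm
    · rintro _ ⟨s, hs, rfl⟩
      constructor
      · rw [← hwa]
        exact hwmono.monotoneOn (Set.left_mem_Icc.2 hab.le) hs hs.1
      · rw [← hwb]
        exact hwmono.monotoneOn hs (Set.right_mem_Icc.2 hab.le) hs.2
    · have := intermediate_value_Icc hab.le hwc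
      rwa [hwa, hwb] at this
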